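/- arXiv:1609.01531 — 6 statements merged into one kernel-verified Lean document; each statement's English description precedes it below -/
import Mathlib

section
/- Let A ∈ ℝ^{m×n}, y ∈ ℝ^m, 0 < q ≤ 1, and let σ > 0 satisfy σ < ‖y‖₂. If x* is a global minimizer of the function x ↦ ∑_{i=1}^n |x_i|^q over the feasible set {x ∈ ℝⁿ : ‖y − Ax‖₂ ≤ σ}, then the constraint is active at x*, i.e. ‖y − Ax*‖₂ = σ. -/
lemma sqrt_sum_sq_eq_norm {m : ℕ} (v : Fin m → ℝ) :
    Real.sqrt (∑ k, v k ^ 2) =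
      ‖(WithLp.equiv 2 (Fin m → ℝ)).symm v‖ := by
  rw [EuclideanSpace.norm_eq]
  congr 1
  refine Finset.sum_congr rfl fun k _ => ?_
  rw [Real.norm_eq_abs, sq_abs]
  rfl

/-- Lemma 5: if `σ < ‖y‖₂`, then at any global minimizer `x*` of the ℓq
quasi-norm over `{x : ‖y - Ax‖₂ ≤ σ}` the constraint is active: `‖y - Ax*‖₂ = σ`. -/
theorem constraint_active_at_lq_minimizer (m n : ℕ) (A : Matrix (Fin m) (Fin n) ℝ)
    (y : Fin m → ℝ) (q σ : ℝ) (hq0 : 0 < q) (hq1 : q ≤ 1) (hσ : 0 < σ)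
    (hy : σ < Real.sqrt (∑ k, (y k) ^ 2))
    (xs : Fin n → ℝ)
    (hfeas : Real.sqrt (∑ k, (y k - A.mulVec xs k) ^ 2) ≤ σ)
    (hmin : ∀ x : Fin n → ℝ, Real.sqrt (∑ k, (y k - A.mulVec x k) ^ 2) ≤ σ →
      (∑ i, |xs i| ^ q) ≤ ∑ i, |x i| ^ q) :
    Real.sqrt (∑ k, (y k - A.mulVec xs k) ^ 2) = σ := by
  by_contra hne
  have hlt : Real.sqrt (∑ k, (y k - A.mulVec xs k) ^ 2) < σ :=
    lt_of_le_of_ne hfeas hne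
  by_cases hxs : xs = 0
  · subst hxs
    rw [Matrix.mulVec_zero] at hfeas
    simp only [Pi.zero_apply, sub_zero] at hfeas
    linarith
  · obtain ⟨i, hi⟩ := Function.ne_iff.mp hxs
    have hS : 0 < ∑ i, |xs i| ^ q := by
      apply Finset.sum_pos' (fun j _ => Real.rpow_nonneg (abs_nonneg _) q)
      exact ⟨i, Finset.mem_univ i, Real.rpow_pos_of_pos (abs_pos.mpr hi) q⟩
    set c := Real.sqrt (∑ k, (A.mulVec xs k) ^ 2) with hc
    have hc0 : 0 ≤ c := Real.sqrt_nonneg _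
    set fxs := Real.sqrt (∑ k, (y k - A.mulVec xs k) ^ 2) with hf
    set ε := (σ - fxs) / (c + 1) with hε
    have hε0 : 0 < ε := div_pos (by linarith) (by linarith)
    set t := max (1/2 : ℝ) (1 - ε) with ht
    have ht0 : 0 < t := lt_max_of_lt_left one_half_pos
    have ht1 : t < 1 := max_lt (by norm_num) (by linarith)
    have h1t : 1 - t ≤ ε := by
      have := le_max_right (1/2 : ℝ) (1 - ε); linarith
    have h1t0 : 0 ≤ 1 - t := by linarith
    -- feasibility of t • xs
    have key : ∀ k, y k - A.mulVec (t • xs) k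
        = (y k - A.mulVec xs k) + (1 - t) * A.mulVec xs k := by
      intro k
      rw [Matrix.mulVec_smul]
      simp only [Pi.smul_apply, smul_eq_mul]
      ring
    have hfeasT : Real.sqrt (∑ k, (y k - A.mulVec (t • xs) k) ^ 2) ≤ σ := by
      have hnorm : Real.sqrt (∑ k, (y k - A.mulVec (t • xs) k) ^ 2)
          = ‖(WithLp.equiv 2 (Fin m → ℝ)).symm (fun k => y k - A.mulVec xs k)
              + (1 - t) • (WithLp.equiv 2 (Fin m → ℝ)).symm (A.mulVec xs)‖ := by
        rw [sqrt_sum_sq_eq_norm]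
        congr 1
        ext k
        exact key k
      rw [hnorm]
      have h1 := norm_add_le
        ((WithLp.equiv 2 (Fin m → ℝ)).symm (fun k => y k - A.mulVec xs k))
        ((1 - t) • (WithLp.equiv 2 (Fin m → ℝ)).symm (A.mulVec xs))
      have h2 : ‖(1 - t) • (WithLp.equiv 2 (Fin m → ℝ)).symm (A.mulVec xs)‖
          = (1 - t) * c := by
        rw [norm_smul, Real.norm_eq_abs, abs_of_nonneg h1t0, hc,
          sqrt_sum_sq_eq_norm]
      have h3 : ‖(WithLp.equiv 2 (Fin m → ℝ)).symm (fun k => y k - A.mulVec xs k)‖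
          = fxs := by rw [hf, sqrt_sum_sq_eq_norm]
      rw [h2, h3] at h1
      have hεc : (1 - t) * c ≤ σ - fxs := by
        have h4 : (1 - t) * c ≤ ε * (c + 1) :=
          mul_le_mul h1t (by linarith) hc0 hε0.le
        have h5 : ε * (c + 1) = σ - fxs := by
          rw [hε, div_mul_cancel₀ _ (by linarith : c + 1 ≠ 0)]
        linarith
      linarith
    have hle := hmin (t • xs) hfeasT
    have hterm : ∀ j, |(t • xs) j| ^ q = t ^ q * |xs j| ^ q := by
      intro j
      have habs : |(t • xs) j| = t * |xs j| := by
        simp [Pi.smul_apply, abs_mul, abs_of_pos ht0]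
      rw [habs, Real.mul_rpow ht0.le (abs_nonneg _)]
    have hsum : (∑ j, |(t • xs) j| ^ q) = t ^ q * ∑ j, |xs j| ^ q := by
      rw [Finset.mul_sum]
      exact Finset.sum_congr rfl fun j _ => hterm j
    have htq : t ^ q < 1 := Real.rpow_lt_one ht0.le ht1 hq0
    have hobj : (∑ j, |(t • xs) j| ^ q) < ∑ j, |xs j| ^ q := by
      rw [hsum]
      nlinarith
    linarith
end

section
/- Let x₀, e ∈ ℝⁿ, let 0 < q ≤ 1, and let S = {i : (x₀)_i ≠ 0} denote the support of x₀. Then ∑_{i=1}^n |(x₀)_i + e_i|^q − ∑_{i=1}^n |(x₀)_i|^q ≥ ∑_{i=1}^n |e_i|^q − 2·∑_{i∈S} |e_i|^q. -/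
lemma abs_rpow_sub_le (a b : ℝ) (q : ℝ) (hq0 : 0 < q) (hq1 : q ≤ 1) :
    |a| ^ q - |b| ^ q ≤ |a + b| ^ q := by
  have h := NNReal.rpow_add_le_add_rpow ‖a + b‖₊ ‖b‖₊ hq0.le hq1
  have h2 : (‖a‖₊) ≤ ‖a + b‖₊ + ‖b‖₊ := by
    have ha : a = (a + b) + (-b) := by ring
    rw [show ‖a‖₊ = ‖(a + b) + (-b)‖₊ from by rw [← ha]]
    exact (nnnorm_add_le _ _).trans (by simp)
  have h3 : (‖a‖₊) ^ q ≤ (‖a + b‖₊ + ‖b‖₊) ^ q :=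
    NNReal.rpow_le_rpow h2 hq0.le
  have h4 := h3.trans h
  have := NNReal.coe_le_coe.2 h4
  simpa [Real.norm_eq_abs, NNReal.coe_rpow, coe_nnnorm, sub_le_iff_le_add] using this

/-- The coordinatewise consequence of Lemma 2 used in the proof of Theorem 1:
`‖x₀ + e‖_q^q - ‖x₀‖_q^q ≥ ‖e‖_q^q - 2 ∑_{i ∈ S} |e i|^q`, where `S` is the
support of `x₀`. -/
theorem lq_support_splitting (n : ℕ) (x₀ e : Fin n → ℝ) (q : ℝ)
    (hq0 : 0 < q) (hq1 : q ≤ 1) :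
    (∑ i, |e i| ^ q) - 2 * ∑ i ∈ Finset.univ.filter (fun i => x₀ i ≠ 0), |e i| ^ q ≤
      (∑ i, |x₀ i + e i| ^ q) - ∑ i, |x₀ i| ^ q := by
  rw [Finset.sum_filter, Finset.mul_sum, ← Finset.sum_sub_distrib, ← Finset.sum_sub_distrib]
  apply Finset.sum_le_sum
  intro i _
  by_cases h : x₀ i = 0
  · simp [h, Real.zero_rpow hq0.ne']
  · simp only [h, if_pos, ne_eq, not_false_eq_true, if_true]
    have := abs_rpow_sub_le (x₀ i) (e i) q hq0 hq1
    nlinarith [Real.rpow_nonneg (abs_nonneg (e i)) q]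
end

section
/- Let A ∈ ℝ^{m×n} have columns A_1,…,A_n each of unit Euclidean norm, and let M ≥ 0 satisfy |A_iᵀA_j| ≤ M for all i ≠ j. Then for every e ∈ ℝⁿ, ‖Ae‖₂² ≥ (1+M)·‖e‖₂² − M·‖e‖₁². -/
/-- Gram-matrix lower bound from the proof of Theorem 1: if the columns of `A`
have unit Euclidean norm and pairwise inner products bounded in absolute value
by `M ≥ 0`, then `‖Ae‖₂² ≥ (1+M)‖e‖₂² - M‖e‖₁²` for every `e`. -/
theorem mutual_coherence_quadratic_bound (m n : ℕ) (A : Matrix (Fin m) (Fin n) ℝ)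
    (M : ℝ) (hM : 0 ≤ M)
    (hcols : ∀ j, ∑ k, (A k j) ^ 2 = 1)
    (hcoh : ∀ i j, i ≠ j → |∑ k, A k i * A k j| ≤ M)
    (e : Fin n → ℝ) :
    (1 + M) * (∑ i, (e i) ^ 2) - M * (∑ i, |e i|) ^ 2 ≤ ∑ k, (A.mulVec e k) ^ 2 := by
  classical
  have expand : ∑ k, (A.mulVec e k) ^ 2
      = ∑ i, ∑ j, (e i * e j) * (∑ k, A k i * A k j) := by
    simp only [Matrix.mulVec, dotProduct, sq, Finset.sum_mul_sum]
    rw [Finset.sum_comm]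
    refine Finset.sum_congr rfl fun i _ => ?_
    rw [Finset.sum_comm]
    refine Finset.sum_congr rfl fun j _ => ?_
    rw [Finset.mul_sum]
    exact Finset.sum_congr rfl fun k _ => by ring
  have split : ∀ (f : Fin n → Fin n → ℝ),
      ∑ i, ∑ j, f i j = ∑ i, f i i + ∑ i, ∑ j ∈ Finset.univ.erase i, f i j := by
    intro f
    rw [← Finset.sum_add_distrib]
    refine Finset.sum_congr rfl fun i _ => ?_
    rw [Finset.add_sum_erase _ _ (Finset.mem_univ i)]
  have habs : (∑ i, |e i|) ^ 2 = ∑ i, (e i) ^ 2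
      + ∑ i, ∑ j ∈ Finset.univ.erase i, |e i| * |e j| := by
    rw [sq, Finset.sum_mul_sum, split fun i j => |e i| * |e j|]
    congr 1
    exact Finset.sum_congr rfl fun i _ => by rw [sq, abs_mul_abs_self]
  have hdiag : ∑ i, (e i * e i) * (∑ k, A k i * A k i) = ∑ i, (e i) ^ 2 := by
    refine Finset.sum_congr rfl fun i _ => ?_
    have : ∑ k, A k i * A k i = 1 := by
      rw [← hcols i]; exact Finset.sum_congr rfl fun k _ => (sq (A k i)).symm
    rw [this]; ring
  have hoff : -(M * ∑ i, ∑ j ∈ Finset.univ.erase i, |e i| * |e j|)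
      ≤ ∑ i, ∑ j ∈ Finset.univ.erase i, (e i * e j) * (∑ k, A k i * A k j) := by
    rw [Finset.mul_sum, ← Finset.sum_neg_distrib]
    refine Finset.sum_le_sum fun i _ => ?_
    rw [Finset.mul_sum, ← Finset.sum_neg_distrib]
    refine Finset.sum_le_sum fun j hj => ?_
    have hij : i ≠ j := (Finset.ne_of_mem_erase hj).symm
    have h1 : |(e i * e j) * (∑ k, A k i * A k j)| ≤ |e i| * |e j| * M := by
      rw [abs_mul, abs_mul]
      exact mul_le_mul_of_nonneg_left (hcoh i j hij)
        (mul_nonneg (abs_nonneg _) (abs_nonneg _))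
    have := neg_abs_le ((e i * e j) * (∑ k, A k i * A k j))
    nlinarith [abs_nonneg ((e i * e j) * (∑ k, A k i * A k j))]
  rw [expand, split fun i j => (e i * e j) * (∑ k, A k i * A k j), hdiag, habs]
  nlinarith [hoff]
end

section
/- Let 0 < q ≤ 1 and let N ≥ 1 be an integer. For all real numbers τ, η_S, η_{S^c} with 0 ≤ τ ≤ 1, N^{1−2/q} ≤ η_S ≤ 1, and 0 < η_{S^c} ≤ 1, the quantity μ = (1+τ)^{2/q} / (η_S + η_{S^c}·τ^{2/q}) satisfies 1 ≤ μ ≤ 4^{1/q}·N^{2/q−1}. -/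
/-- Two-sided bound on the auxiliary quantity `μ = (1+τ)^{2/q}/(η_S + η_{S^c} τ^{2/q})`
used in the proof of Theorem 1: `1 ≤ μ ≤ 4^{1/q} N^{2/q-1}`. -/
theorem mu_two_sided_bound (q : ℝ) (hq0 : 0 < q) (hq1 : q ≤ 1) (N : ℕ) (hN : 1 ≤ N)
    (τ ηS ηSc : ℝ) (hτ0 : 0 ≤ τ) (hτ1 : τ ≤ 1)
    (hηS0 : (N : ℝ) ^ (1 - 2 / q) ≤ ηS) (hηS1 : ηS ≤ 1)
    (hηSc0 : 0 < ηSc) (hηSc1 : ηSc ≤ 1) :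
    1 ≤ (1 + τ) ^ (2 / q) / (ηS + ηSc * τ ^ (2 / q)) ∧
      (1 + τ) ^ (2 / q) / (ηS + ηSc * τ ^ (2 / q)) ≤
        (4 : ℝ) ^ (1 / q) * (N : ℝ) ^ (2 / q - 1) := by
  have hNpos : (0 : ℝ) < (N : ℝ) := by exact_mod_cast Nat.lt_of_lt_of_le Nat.zero_lt_one hN
  have hp1 : (1 : ℝ) ≤ 2 / q := by
    rw [le_div_iff₀ hq0]; linarith
  have hp0 : (0 : ℝ) < 2 / q := by linarith
  have hηSpos : 0 < ηS := lt_of_lt_of_le (Real.rpow_pos_of_pos hNpos _) hηS0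
  have hτp0 : 0 ≤ τ ^ (2 / q) := Real.rpow_nonneg hτ0 _
  have hD0 : 0 < ηS + ηSc * τ ^ (2 / q) := by positivity
  have hτpτ : τ ^ (2 / q) ≤ τ := by
    rcases eq_or_lt_of_le hτ0 with h | h
    · rw [← h, Real.zero_rpow (ne_of_gt hp0)]
    · calc τ ^ (2 / q) ≤ τ ^ (1 : ℝ) :=
            Real.rpow_le_rpow_of_exponent_ge h hτ1 hp1
        _ = τ := Real.rpow_one τ
  have h1τ : 1 + τ ≤ (1 + τ) ^ (2 / q) := by
    calc 1 + τ = (1 + τ) ^ (1 : ℝ) := (Real.rpow_one _).symm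
      _ ≤ (1 + τ) ^ (2 / q) :=
        Real.rpow_le_rpow_of_exponent_le (by linarith) hp1
  constructor
  · rw [le_div_iff₀ hD0, one_mul]
    have h2 : ηSc * τ ^ (2 / q) ≤ τ ^ (2 / q) := by
      nlinarith
    linarith
  · have hnum : (1 + τ) ^ (2 / q) ≤ (2 : ℝ) ^ (2 / q) :=
      Real.rpow_le_rpow (by linarith) (by linarith) (le_of_lt hp0)
    have hden : (N : ℝ) ^ (1 - 2 / q) ≤ ηS + ηSc * τ ^ (2 / q) := by nlinarith
    have hdenpos : (0 : ℝ) < (N : ℝ) ^ (1 - 2 / q) := Real.rpow_pos_of_pos hNpos _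
    have hstep : (1 + τ) ^ (2 / q) / (ηS + ηSc * τ ^ (2 / q)) ≤
        (2 : ℝ) ^ (2 / q) / (N : ℝ) ^ (1 - 2 / q) :=
      div_le_div₀ (by positivity) hnum hdenpos hden
    have heq : (2 : ℝ) ^ (2 / q) / (N : ℝ) ^ (1 - 2 / q) =
        (4 : ℝ) ^ (1 / q) * (N : ℝ) ^ (2 / q - 1) := by
      rw [show (4 : ℝ) = (2 : ℝ) ^ (2 : ℝ) by norm_num,
        ← Real.rpow_mul (by norm_num : (0:ℝ) ≤ 2),
        show (2 : ℝ) * (1 / q) = 2 / q by ring,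
        div_eq_mul_inv, ← Real.rpow_neg (le_of_lt hNpos),
        show -(1 - 2 / q) = 2 / q - 1 by ring]
    rw [← heq]; exact hstep
end

section
/- Let A ∈ ℝ^{m×n} have columns A_1,…,A_n each of unit Euclidean norm, with mutual coherence M = max_{i≠j}|A_iᵀA_j| > 0, and let 0 < q ≤ 1. Let x₀ ∈ ℝⁿ have exactly N ≥ 1 nonzero entries, let w ∈ ℝ^m satisfy ‖w‖₂ ≤ ε with 0 < ε ≤ σ, and set y = Ax₀ + w. Let x* be a global minimizer of x ↦ ∑_{i=1}^n |x_i|^q over {x ∈ ℝⁿ : ‖y − Ax‖₂ ≤ σ}, set e = x* − x₀, and suppose γ > 0 satisfies (γN)^{1/q−1}·‖e‖₁ ≤ ‖e‖_q. If N < γ^{2/q−2}·(M+1)/(4^{1/q}·M), then ‖x* − x₀‖₂² ≤ (ε+σ)² / (1 − M·(4^{1/q}·N/γ^{2/q−2} − 1)). -/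
lemma rpow_subadd {a b : ℝ} (ha : 0 ≤ a) (hb : 0 ≤ b) {q : ℝ} (h0 : 0 ≤ q) (h1 : q ≤ 1) :
    (a + b) ^ q ≤ a ^ q + b ^ q := by
  have h := NNReal.rpow_add_le_add_rpow (⟨a, ha⟩ : NNReal) (⟨b, hb⟩ : NNReal) h0 h1
  have := NNReal.coe_le_coe.2 h
  exact this

lemma cs_sum (ι : Type*) [Fintype ι] (f g : ι → ℝ) :
    ∑ i, f i * g i ≤ Real.sqrt (∑ i, f i ^ 2) * Real.sqrt (∑ i, g i ^ 2) := by
  have h := Finset.sum_mul_sq_le_sq_mul_sq Finset.univ f g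
  calc ∑ i, f i * g i ≤ |∑ i, f i * g i| := le_abs_self _
    _ = Real.sqrt ((∑ i, f i * g i) ^ 2) := (Real.sqrt_sq_eq_abs _).symm
    _ ≤ Real.sqrt ((∑ i, f i ^ 2) * ∑ i, g i ^ 2) := Real.sqrt_le_sqrt h
    _ = _ := Real.sqrt_mul (by positivity) _

lemma jensen_step {ι : Type*} (T : Finset ι) (e : ι → ℝ) {q : ℝ} (hq0 : 0 < q) (hq1 : q ≤ 1)
    {N : ℕ} (hT : T.card = N) (hN : 1 ≤ N) :
    ∑ i ∈ T, |e i| ^ q ≤ (N : ℝ) * ((1 / (N : ℝ)) * ∑ i ∈ T, (e i) ^ 2) ^ (q / 2) := by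
  have hNp : (0 : ℝ) < N := by exact_mod_cast hN
  have hw' : ∑ _i ∈ T, (1 / (N : ℝ)) = 1 := by
    rw [Finset.sum_const, hT, nsmul_eq_mul]; field_simp
  have hp : (1 : ℝ) ≤ 2 / q := by
    rw [le_div_iff₀ hq0]; linarith
  have hjen := Real.rpow_arith_mean_le_arith_mean_rpow T (fun _ => 1 / (N : ℝ))
    (fun i => |e i| ^ q) (fun i _ => by positivity) hw'
    (fun i _ => Real.rpow_nonneg (abs_nonneg _) q) hp
  have hz2 : ∀ i ∈ T, (1 / (N : ℝ)) * (|e i| ^ q) ^ (2 / q) = (1 / (N : ℝ)) * (e i) ^ 2 := by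
    intro i _
    congr 1
    rw [← Real.rpow_mul (abs_nonneg _)]
    have : q * (2 / q) = 2 := by field_simp
    rw [this, show ((2:ℝ) = ((2:ℕ):ℝ)) by norm_num, Real.rpow_natCast, sq_abs]
  rw [Finset.sum_congr rfl hz2] at hjen
  have hbase : 0 ≤ ∑ i ∈ T, (1 / (N : ℝ)) * |e i| ^ q := by
    apply Finset.sum_nonneg; intro i _; positivity
  have h2 := Real.rpow_le_rpow (Real.rpow_nonneg hbase _) hjen (by positivity : (0:ℝ) ≤ q / 2)
  rw [← Real.rpow_mul hbase] at h2
  have : (2 / q) * (q / 2) = 1 := by field_simp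
  rw [this, Real.rpow_one, ← Finset.mul_sum, ← Finset.mul_sum] at h2
  calc ∑ i ∈ T, |e i| ^ q = (N : ℝ) * ((1 / (N:ℝ)) * ∑ i ∈ T, |e i| ^ q) := by field_simp
    _ ≤ _ := by
        apply mul_le_mul_of_nonneg_left h2 (le_of_lt hNp)

lemma gram_lower {m n : ℕ} (A : Matrix (Fin m) (Fin n) ℝ)
    (hcols : ∀ j, ∑ k, (A k j) ^ 2 = 1)
    (M : ℝ)
    (hub : ∀ i j : Fin n, i ≠ j → |∑ k, A k i * A k j| ≤ M)
    (e : Fin n → ℝ) :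
    (1 + M) * (∑ i, e i ^ 2) - M * (∑ i, |e i|) * (∑ i, |e i|) ≤
      ∑ k, (A.mulVec e k) ^ 2 := by
  set S1 := ∑ i, |e i| with hS1
  have expand : ∑ k, (A.mulVec e k) ^ 2 = ∑ i, ∑ j, e i * e j * (∑ k, A k i * A k j) := by
    simp only [Matrix.mulVec, dotProduct, pow_two, Finset.sum_mul_sum]
    rw [Finset.sum_comm]
    apply Finset.sum_congr rfl; intro i _
    rw [Finset.sum_comm]
    apply Finset.sum_congr rfl; intro j _
    rw [Finset.mul_sum]
    apply Finset.sum_congr rfl; intro k _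
    ring
  rw [expand]
  have key : ∀ i : Fin n, e i ^ 2 - M * (|e i| * (S1 - |e i|)) ≤
      ∑ j, e i * e j * (∑ k, A k i * A k j) := by
    intro i
    rw [← Finset.add_sum_erase _ _ (Finset.mem_univ i)]
    have hdiag : e i * e i * (∑ k, A k i * A k i) = e i ^ 2 := by
      have : (∑ k, A k i * A k i) = 1 := by
        rw [← hcols i]; apply Finset.sum_congr rfl; intro k _; ring
      rw [this]; ring
    rw [hdiag]
    have hoff : -(M * (|e i| * (S1 - |e i|))) ≤
        ∑ j ∈ Finset.univ.erase i, e i * e j * (∑ k, A k i * A k j) := by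
      have hterm : ∀ j ∈ Finset.univ.erase i,
          -(M * (|e i| * |e j|)) ≤ e i * e j * (∑ k, A k i * A k j) := by
        intro j hj
        have hji : j ≠ i := Finset.ne_of_mem_erase hj
        have habs : |e i * e j * (∑ k, A k i * A k j)| ≤ M * (|e i| * |e j|) := by
          rw [abs_mul, abs_mul]
          calc |e i| * |e j| * |∑ k, A k i * A k j|
              ≤ |e i| * |e j| * M := by
                apply mul_le_mul_of_nonneg_left (hub i j (Ne.symm hji)) (by positivity)
            _ = M * (|e i| * |e j|) := by ring
        linarith [neg_abs_le (e i * e j * (∑ k, A k i * A k j))]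
      calc -(M * (|e i| * (S1 - |e i|)))
          = ∑ j ∈ Finset.univ.erase i, -(M * (|e i| * |e j|)) := by
            simp only [Finset.sum_neg_distrib, ← Finset.mul_sum]
            have : ∑ j ∈ Finset.univ.erase i, |e j| = S1 - |e i| := by
              rw [hS1, ← Finset.add_sum_erase _ _ (Finset.mem_univ i)]; ring
            rw [this]
        _ ≤ _ := Finset.sum_le_sum hterm
    linarith
  calc (1 + M) * (∑ i, e i ^ 2) - M * S1 * S1
      = ∑ i, (e i ^ 2 - M * (|e i| * (S1 - |e i|))) := by
        have h1 : ∑ i, (|e i| * S1) = S1 * S1 := by rw [← Finset.sum_mul]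
        have h2 : ∀ i : Fin n, |e i| * |e i| = e i ^ 2 := fun i => by
          rw [← sq_abs]; ring
        simp only [mul_sub, Finset.sum_sub_distrib]
        have hA : ∑ x, M * (|e x| * S1) = M * (S1 * S1) := by
          rw [← Finset.mul_sum, h1]
        have hB : ∑ x, M * (|e x| * |e x|) = M * ∑ i, e i ^ 2 := by
          simp_rw [h2]; rw [← Finset.mul_sum]
        rw [hA, hB]; ring
    _ ≤ _ := Finset.sum_le_sum (fun i _ => key i)

lemma coeff_identity {q γ S2 : ℝ} {N : ℕ} (hq0 : 0 < q) (hq1 : q ≤ 1) (hγ : 0 < γ)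
    (hN : 1 ≤ N) (hS2 : 0 < S2) :
    ((γ * N) ^ (1 - 1/q) * (2 * ((N : ℝ) * ((1/(N:ℝ)) * S2) ^ (q/2))) ^ (1/q)) ^ 2
      = (4 : ℝ) ^ (1/q) * N / γ ^ (2/q - 2) * S2 := by
  have hNr : (0:ℝ) < (N:ℝ) := by exact_mod_cast hN
  have hγN : (0:ℝ) < γ * N := by positivity
  have hX : (0:ℝ) < (1/(N:ℝ)) * S2 := by positivity
  have hY : (0:ℝ) < ((1/(N:ℝ)) * S2) ^ (q/2) := Real.rpow_pos_of_pos hX _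
  have hZ : (0:ℝ) < 2 * ((N:ℝ) * ((1/(N:ℝ)) * S2) ^ (q/2)) := by positivity
  have hL : (0:ℝ) < ((γ * N) ^ (1 - 1/q) * (2 * ((N : ℝ) * ((1/(N:ℝ)) * S2) ^ (q/2))) ^ (1/q)) ^ 2 := by
    have := Real.rpow_pos_of_pos hγN (1 - 1/q)
    have := Real.rpow_pos_of_pos hZ (1/q)
    positivity
  have hγr : (0:ℝ) < γ ^ (2/q - 2) := Real.rpow_pos_of_pos hγ _
  have h4 : (0:ℝ) < (4:ℝ) ^ (1/q) := Real.rpow_pos_of_pos (by norm_num) _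
  have hR : (0:ℝ) < (4 : ℝ) ^ (1/q) * N / γ ^ (2/q - 2) * S2 := by positivity
  rw [← Real.exp_log hL, ← Real.exp_log hR]
  congr 1
  rw [Real.log_pow,
    Real.log_mul (ne_of_gt (Real.rpow_pos_of_pos hγN _)) (ne_of_gt (Real.rpow_pos_of_pos hZ _)),
    Real.log_rpow hγN, Real.log_rpow hZ,
    Real.log_mul (by norm_num) (ne_of_gt (by positivity : (0:ℝ) < (N:ℝ) * ((1/(N:ℝ)) * S2) ^ (q/2))),
    Real.log_mul (ne_of_gt hNr) (ne_of_gt hY),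
    Real.log_rpow hX,
    Real.log_mul (ne_of_gt (one_div_pos.2 hNr)) (ne_of_gt hS2),
    Real.log_mul (ne_of_gt (by positivity : (0:ℝ) < (4:ℝ) ^ (1/q) * N / γ ^ (2/q-2))) (ne_of_gt hS2),
    Real.log_div (ne_of_gt (by positivity : (0:ℝ) < (4:ℝ) ^ (1/q) * N)) (ne_of_gt hγr),
    Real.log_mul (ne_of_gt h4) (ne_of_gt hNr),
    Real.log_rpow (by norm_num : (0:ℝ) < 4), Real.log_rpow hγ,
    Real.log_mul (ne_of_gt hγ) (ne_of_gt hNr),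
    show Real.log (1/(N:ℝ)) = -Real.log N by rw [one_div, Real.log_inv],
    show Real.log 4 = 2 * Real.log 2 by
      rw [show (4:ℝ) = 2^2 by norm_num, Real.log_pow]; push_cast; ring]
  push_cast
  field_simp
  ring

set_option maxHeartbeats 1000000 in
/-- Theorem 1 (main result): unified stable recovery bound for the noise-aware
ℓq model. `M` is the mutual coherence of `A` (the maximum of `|A_iᵀ A_j|` over
`i ≠ j`), `x₀` has exactly `N` nonzero entries, `y = A x₀ + w` with `‖w‖₂ ≤ ε ≤ σ`,
`x*` is any global minimizer of `‖·‖_q^q` over `{x : ‖y - Ax‖₂ ≤ σ}`, and `γ > 0`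
satisfies `(γN)^{1/q-1} ‖e‖₁ ≤ ‖e‖_q` for the error `e = x* - x₀`. If
`N < γ^{2/q-2}(M+1)/(4^{1/q} M)`, then
`‖x* - x₀‖₂² ≤ (ε+σ)²/(1 - M(4^{1/q} N / γ^{2/q-2} - 1))`. -/
theorem lq_stable_recovery_bound (m n N : ℕ) (hN : 1 ≤ N)
    (A : Matrix (Fin m) (Fin n) ℝ)
    (hcols : ∀ j, ∑ k, (A k j) ^ 2 = 1)
    (M : ℝ) (hMpos : 0 < M)
    (hM : IsGreatest {t : ℝ | ∃ i j : Fin n, i ≠ j ∧ t = |∑ k, A k i * A k j|} M)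
    (q : ℝ) (hq0 : 0 < q) (hq1 : q ≤ 1)
    (x₀ : Fin n → ℝ)
    (hx₀ : (Finset.univ.filter (fun i => x₀ i ≠ 0)).card = N)
    (w : Fin m → ℝ) (ε σ : ℝ) (hε : 0 < ε) (hεσ : ε ≤ σ)
    (hw : Real.sqrt (∑ k, (w k) ^ 2) ≤ ε)
    (y : Fin m → ℝ) (hy : y = A.mulVec x₀ + w)
    (xs : Fin n → ℝ)
    (hfeas : Real.sqrt (∑ k, (y k - A.mulVec xs k) ^ 2) ≤ σ)
    (hmin : ∀ x : Fin n → ℝ, Real.sqrt (∑ k, (y k - A.mulVec x k) ^ 2) ≤ σ →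
      (∑ i, |xs i| ^ q) ≤ ∑ i, |x i| ^ q)
    (γ : ℝ) (hγ : 0 < γ)
    (hγe : (γ * N) ^ (1 / q - 1) * (∑ i, |xs i - x₀ i|) ≤
      (∑ i, |xs i - x₀ i| ^ q) ^ (1 / q))
    (hNs : (N : ℝ) < γ ^ (2 / q - 2) * (M + 1) / ((4 : ℝ) ^ (1 / q) * M)) :
    (∑ i, (xs i - x₀ i) ^ 2) ≤
      (ε + σ) ^ 2 / (1 - M * ((4 : ℝ) ^ (1 / q) * N / γ ^ (2 / q - 2) - 1)) := by
  have hNr : (0:ℝ) < (N:ℝ) := by exact_mod_cast hN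
  set c : ℝ := (4 : ℝ) ^ (1/q) with hc
  set g : ℝ := γ ^ (2/q - 2) with hg
  have hcpos : 0 < c := Real.rpow_pos_of_pos (by norm_num) _
  have hgpos : 0 < g := Real.rpow_pos_of_pos hγ _
  -- positivity of the denominator
  have hD : 0 < 1 - M * (c * N / g - 1) := by
    have h1 : (N:ℝ) * (c * M) < g * (M + 1) := (lt_div_iff₀ (by positivity)).1 hNs
    have h2 : M * (c * ↑N / g) < M + 1 := by
      rw [mul_div_assoc', div_lt_iff₀ hgpos]
      nlinarith
    nlinarith
  set S2 : ℝ := ∑ i, (xs i - x₀ i) ^ 2 with hS2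
  have hS2nn : 0 ≤ S2 := Finset.sum_nonneg fun i _ => sq_nonneg _
  rcases hS2nn.eq_or_lt with hS20 | hS2pos
  · rw [← hS20]; positivity
  set S1 : ℝ := ∑ i, |xs i - x₀ i| with hS1
  have hS1nn : 0 ≤ S1 := Finset.sum_nonneg fun i _ => abs_nonneg _
  set Sq : ℝ := ∑ i, |xs i - x₀ i| ^ q with hSq
  -- x₀ is feasible
  have hfeas0 : Real.sqrt (∑ k, (y k - A.mulVec x₀ k) ^ 2) ≤ σ := by
    have : ∀ k, y k - A.mulVec x₀ k = w k := by
      intro k; rw [hy]; simp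
    simp_rw [this]
    exact le_trans hw hεσ
  have hqmin := hmin x₀ hfeas0
  -- cone condition
  set T : Finset (Fin n) := Finset.univ.filter (fun i => x₀ i ≠ 0) with hT
  have hsplit : ∀ f : Fin n → ℝ, ∑ i ∈ T, f i + ∑ i ∈ Finset.univ.filter (fun i => ¬ x₀ i ≠ 0), f i = ∑ i, f i :=
    fun f => Finset.sum_filter_add_sum_filter_not _ _ f
  have hcone : Sq ≤ 2 * ∑ i ∈ T, |xs i - x₀ i| ^ q := by
    have hxs_split := hsplit (fun i => |xs i| ^ q)
    have hx0_split := hsplit (fun i => |x₀ i| ^ q)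
    have he_split := hsplit (fun i => |xs i - x₀ i| ^ q)
    have h0 : ∑ i ∈ Finset.univ.filter (fun i => ¬ x₀ i ≠ 0), |x₀ i| ^ q = 0 := by
      apply Finset.sum_eq_zero; intro i hi
      rw [Finset.mem_filter] at hi
      have : x₀ i = 0 := by tauto
      simp [this, Real.zero_rpow hq0.ne']
    have hsame : ∑ i ∈ Finset.univ.filter (fun i => ¬ x₀ i ≠ 0), |xs i| ^ q
        = ∑ i ∈ Finset.univ.filter (fun i => ¬ x₀ i ≠ 0), |xs i - x₀ i| ^ q := by
      apply Finset.sum_congr rfl; intro i hi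
      rw [Finset.mem_filter] at hi
      have : x₀ i = 0 := by tauto
      rw [this, sub_zero]
    have htri : ∀ i ∈ T, |x₀ i| ^ q ≤ |xs i| ^ q + |xs i - x₀ i| ^ q := by
      intro i _
      have h1 : |x₀ i| ≤ |xs i| + |xs i - x₀ i| := by
        have : x₀ i = xs i - (xs i - x₀ i) := by ring
        calc |x₀ i| = |xs i - (xs i - x₀ i)| := by rw [← this]
          _ ≤ |xs i| + |xs i - x₀ i| := abs_sub _ _
      calc |x₀ i| ^ q ≤ (|xs i| + |xs i - x₀ i|) ^ q :=
            Real.rpow_le_rpow (abs_nonneg _) h1 hq0.le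
        _ ≤ |xs i| ^ q + |xs i - x₀ i| ^ q :=
            rpow_subadd (abs_nonneg _) (abs_nonneg _) hq0.le hq1
    have htri' : ∑ i ∈ T, |x₀ i| ^ q ≤ ∑ i ∈ T, |xs i| ^ q + ∑ i ∈ T, |xs i - x₀ i| ^ q := by
      rw [← Finset.sum_add_distrib]
      exact Finset.sum_le_sum htri
    -- from minimality
    have hq2 : ∑ i ∈ T, |xs i| ^ q + ∑ i ∈ Finset.univ.filter (fun i => ¬ x₀ i ≠ 0), |xs i - x₀ i| ^ q
        ≤ ∑ i ∈ T, |x₀ i| ^ q := by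
      rw [← hsame]
      calc _ = ∑ i, |xs i| ^ q := hxs_split
        _ ≤ ∑ i, |x₀ i| ^ q := hqmin
        _ = ∑ i ∈ T, |x₀ i| ^ q := by rw [← hx0_split, h0, add_zero]
    have hBC : ∑ i ∈ Finset.univ.filter (fun i => ¬ x₀ i ≠ 0), |xs i - x₀ i| ^ q
        ≤ ∑ i ∈ T, |xs i - x₀ i| ^ q := by linarith
    calc Sq = ∑ i ∈ T, |xs i - x₀ i| ^ q
        + ∑ i ∈ Finset.univ.filter (fun i => ¬ x₀ i ≠ 0), |xs i - x₀ i| ^ q := (he_split).symm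
      _ ≤ 2 * ∑ i ∈ T, |xs i - x₀ i| ^ q := by linarith
  -- Jensen bound on T
  have hTcard : T.card = N := hx₀
  have hjen := jensen_step T (fun i => xs i - x₀ i) hq0 hq1 hTcard hN
  have hTsub : ∑ i ∈ T, (xs i - x₀ i) ^ 2 ≤ S2 :=
    Finset.sum_le_sum_of_subset_of_nonneg (Finset.subset_univ T) (fun i _ _ => sq_nonneg _)
  have hmono : ((1/(N:ℝ)) * ∑ i ∈ T, (xs i - x₀ i) ^ 2) ^ (q/2) ≤ ((1/(N:ℝ)) * S2) ^ (q/2) := by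
    apply Real.rpow_le_rpow (by positivity)
      (mul_le_mul_of_nonneg_left hTsub (by positivity)) (by positivity)
  set Z : ℝ := 2 * ((N:ℝ) * ((1/(N:ℝ)) * S2) ^ (q/2)) with hZ
  have hSqZ : Sq ≤ Z := by
    calc Sq ≤ 2 * ∑ i ∈ T, |xs i - x₀ i| ^ q := hcone
      _ ≤ 2 * ((N:ℝ) * ((1/(N:ℝ)) * ∑ i ∈ T, (xs i - x₀ i) ^ 2) ^ (q/2)) := by linarith [hjen]
      _ ≤ Z := by rw [hZ]; nlinarith [hmono, hNr]
  -- bound S1 by R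
  have hγN : (0:ℝ) < γ * N := by positivity
  have hSqnn : 0 ≤ Sq := Finset.sum_nonneg fun i _ => Real.rpow_nonneg (abs_nonneg _) _
  set R : ℝ := (γ * N) ^ (1 - 1/q) * Z ^ (1/q) with hR
  have hS1R : S1 ≤ R := by
    have h1 : Sq ^ (1/q) ≤ Z ^ (1/q) :=
      Real.rpow_le_rpow hSqnn hSqZ (by positivity)
    have h2 : (γ * N) ^ (1/q - 1) * S1 ≤ Z ^ (1/q) := le_trans hγe h1
    have h3 : (γ * ↑N) ^ (1 - 1/q) * ((γ * ↑N) ^ (1/q - 1) * S1) ≤ (γ * ↑N) ^ (1 - 1/q) * Z ^ (1/q) :=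
      mul_le_mul_of_nonneg_left h2 (Real.rpow_pos_of_pos hγN _).le
    calc S1 = (γ * ↑N) ^ (1 - 1/q) * ((γ * ↑N) ^ (1/q - 1) * S1) := by
          rw [← mul_assoc, ← Real.rpow_add hγN]
          norm_num
      _ ≤ R := h3
  have hRsq : R ^ 2 = c * N / g * S2 := coeff_identity hq0 hq1 hγ hN hS2pos
  have hS1sq : S1 * S1 ≤ c * N / g * S2 := by
    have := mul_self_le_mul_self hS1nn hS1R
    calc S1 * S1 ≤ R * R := this
      _ = R ^ 2 := (sq R).symm
      _ = _ := hRsq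
  -- Gram bound
  have hub : ∀ i j : Fin n, i ≠ j → |∑ k, A k i * A k j| ≤ M := fun i j hij =>
    hM.2 ⟨i, j, hij, rfl⟩
  have hgram := gram_lower A hcols M hub (fun i => xs i - x₀ i)
  -- residual bound
  have hAe : ∑ k, (A.mulVec (fun i => xs i - x₀ i) k) ^ 2 ≤ (ε + σ) ^ 2 := by
    have hvk : ∀ k, A.mulVec (fun i => xs i - x₀ i) k = w k - (y k - A.mulVec xs k) := by
      intro k
      have h1 : A.mulVec (fun i => xs i - x₀ i) k = A.mulVec xs k - A.mulVec x₀ k := by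
        simp [Matrix.mulVec, dotProduct, mul_sub, Finset.sum_sub_distrib]
      rw [h1, hy]
      simp [Pi.add_apply]
      ring
    have ha2 : ∑ k, (w k) ^ 2 = Real.sqrt (∑ k, (w k) ^ 2) ^ 2 :=
      (Real.sq_sqrt (Finset.sum_nonneg fun k _ => sq_nonneg _)).symm
    have hb2 : ∑ k, (y k - A.mulVec xs k) ^ 2
        = Real.sqrt (∑ k, (y k - A.mulVec xs k) ^ 2) ^ 2 :=
      (Real.sq_sqrt (Finset.sum_nonneg fun k _ => sq_nonneg _)).symm
    have hexp : ∑ k, (w k - (y k - A.mulVec xs k)) ^ 2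
        = ∑ k, (w k)^2 - 2 * ∑ k, w k * (y k - A.mulVec xs k)
          + ∑ k, (y k - A.mulVec xs k)^2 := by
      have hk : ∀ k : Fin m, (w k - (y k - A.mulVec xs k)) ^ 2
          = (w k)^2 - 2 * (w k * (y k - A.mulVec xs k)) + (y k - A.mulVec xs k)^2 :=
        fun k => by ring
      simp_rw [hk, Finset.sum_add_distrib, Finset.sum_sub_distrib, ← Finset.mul_sum]
    have hann : 0 ≤ Real.sqrt (∑ k, (w k) ^ 2) := Real.sqrt_nonneg _
    have hbnn : 0 ≤ Real.sqrt (∑ k, (y k - A.mulVec xs k) ^ 2) := Real.sqrt_nonneg _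
    have hneg : -(∑ k, w k * (y k - A.mulVec xs k))
        ≤ Real.sqrt (∑ k, (w k) ^ 2) * Real.sqrt (∑ k, (y k - A.mulVec xs k) ^ 2) := by
      have hcs := cs_sum (Fin m) (fun k => -(w k)) (fun k => y k - A.mulVec xs k)
      have heq : ∑ k, (-(w k)) * (y k - A.mulVec xs k)
          = -(∑ k, w k * (y k - A.mulVec xs k)) := by
        rw [← Finset.sum_neg_distrib]
        apply Finset.sum_congr rfl; intros; ring
      rw [heq] at hcs
      simpa [neg_sq] using hcs
    have hsum : Real.sqrt (∑ k, (w k) ^ 2) + Real.sqrt (∑ k, (y k - A.mulVec xs k) ^ 2)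
        ≤ ε + σ := add_le_add hw hfeas
    have hsq : (Real.sqrt (∑ k, (w k) ^ 2) + Real.sqrt (∑ k, (y k - A.mulVec xs k) ^ 2)) ^ 2
        ≤ (ε + σ) ^ 2 := by
      apply pow_le_pow_left₀ (by positivity) hsum
    have hexpand : (Real.sqrt (∑ k, (w k) ^ 2) + Real.sqrt (∑ k, (y k - A.mulVec xs k) ^ 2)) ^ 2
        = Real.sqrt (∑ k, (w k) ^ 2) ^ 2
          + 2 * (Real.sqrt (∑ k, (w k) ^ 2) * Real.sqrt (∑ k, (y k - A.mulVec xs k) ^ 2))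
          + Real.sqrt (∑ k, (y k - A.mulVec xs k) ^ 2) ^ 2 := by ring
    simp_rw [hvk]
    rw [hexp, ha2, hb2]
    linarith
  -- combine
  have hchain : (1 - M * (c * N / g - 1)) * S2 ≤ (ε + σ) ^ 2 := by
    have hg1 : (1 + M) * S2 - M * S1 * S1 ≤ ∑ k, (A.mulVec (fun i => xs i - x₀ i) k) ^ 2 := hgram
    have hM1 : M * S1 * S1 ≤ M * (c * N / g * S2) := by
      rw [mul_assoc]
      exact mul_le_mul_of_nonneg_left hS1sq hMpos.le
    have hid : (1 - M * (c * ↑N / g - 1)) * S2 = (1 + M) * S2 - M * (c * ↑N / g * S2) := by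
      ring
    rw [hid]
    linarith
  rw [le_div_iff₀ hD]
  calc S2 * (1 - M * (c * ↑N / g - 1)) = (1 - M * (c * ↑N / g - 1)) * S2 := by ring
    _ ≤ (ε + σ) ^ 2 := hchain
end

section
/- Let A ∈ ℝ^{m×n} have columns A_1,…,A_n each of unit Euclidean norm, with mutual coherence M = max_{i≠j}|A_iᵀA_j| > 0. Let x₀ ∈ ℝⁿ have exactly N ≥ 1 nonzero entries with N < (M⁻¹+1)/4, let w ∈ ℝ^m satisfy ‖w‖₂ ≤ ε with 0 < ε ≤ σ, and set y = Ax₀ + w. If x* is a global minimizer of the ℓ¹ norm x ↦ ∑_{i=1}^n |x_i| over {x ∈ ℝⁿ : ‖y − Ax‖₂ ≤ σ}, then ‖x* − x₀‖₂² ≤ (ε+σ)² / (1 − M·(4N−1)). -/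
private lemma sqrt_sum_sq_add_le {m : ℕ} (a b : Fin m → ℝ) :
    Real.sqrt (∑ k, (a k + b k) ^ 2) ≤
      Real.sqrt (∑ k, (a k) ^ 2) + Real.sqrt (∑ k, (b k) ^ 2) := by
  have h := norm_add_le (E := EuclideanSpace ℝ (Fin m)) (WithLp.toLp 2 a) (WithLp.toLp 2 b)
  simpa [EuclideanSpace.norm_eq, Real.norm_eq_abs, sq_abs] using h

private lemma sum_mulVec_sq {m n : ℕ} (A : Matrix (Fin m) (Fin n) ℝ) (h : Fin n → ℝ) :
    ∑ k, (A.mulVec h k) ^ 2 = ∑ i, ∑ j, h i * h j * (∑ k, A k i * A k j) := by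
  have step1 : ∀ k, (A.mulVec h k) ^ 2 = ∑ i, ∑ j, (A k i * h i) * (A k j * h j) := by
    intro k
    simp [Matrix.mulVec, dotProduct, sq, Finset.sum_mul_sum]
  calc ∑ k, (A.mulVec h k) ^ 2
      = ∑ k, ∑ i, ∑ j, (A k i * h i) * (A k j * h j) := by
        exact Finset.sum_congr rfl fun k _ => step1 k
    _ = ∑ i, ∑ k, ∑ j, (A k i * h i) * (A k j * h j) := Finset.sum_comm
    _ = ∑ i, ∑ j, ∑ k, (A k i * h i) * (A k j * h j) :=
        Finset.sum_congr rfl fun i _ => Finset.sum_comm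
    _ = ∑ i, ∑ j, h i * h j * (∑ k, A k i * A k j) := by
        refine Finset.sum_congr rfl fun i _ => Finset.sum_congr rfl fun j _ => ?_
        rw [Finset.mul_sum]
        exact Finset.sum_congr rfl fun k _ => by ring

/-- The `q = 1` case of Theorem 1 (Donoho–Elad–Temlyakov bound): if `x₀` has
exactly `N ≥ 1` nonzero entries with `N < (M⁻¹ + 1)/4`, `y = A x₀ + w` with
`‖w‖₂ ≤ ε ≤ σ`, and `x*` minimizes the ℓ¹ norm over `{x : ‖y - Ax‖₂ ≤ σ}`, then
`‖x* - x₀‖₂² ≤ (ε+σ)²/(1 - M(4N - 1))`. -/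
theorem l1_stable_recovery_bound (m n N : ℕ) (hN : 1 ≤ N)
    (A : Matrix (Fin m) (Fin n) ℝ)
    (hcols : ∀ j, ∑ k, (A k j) ^ 2 = 1)
    (M : ℝ) (hMpos : 0 < M)
    (hM : IsGreatest {t : ℝ | ∃ i j : Fin n, i ≠ j ∧ t = |∑ k, A k i * A k j|} M)
    (x₀ : Fin n → ℝ)
    (hx₀ : (Finset.univ.filter (fun i => x₀ i ≠ 0)).card = N)
    (hNs : (N : ℝ) < (M⁻¹ + 1) / 4)
    (w : Fin m → ℝ) (ε σ : ℝ) (hε : 0 < ε) (hεσ : ε ≤ σ)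
    (hw : Real.sqrt (∑ k, (w k) ^ 2) ≤ ε)
    (y : Fin m → ℝ) (hy : y = A.mulVec x₀ + w)
    (xs : Fin n → ℝ)
    (hfeas : Real.sqrt (∑ k, (y k - A.mulVec xs k) ^ 2) ≤ σ)
    (hmin : ∀ x : Fin n → ℝ, Real.sqrt (∑ k, (y k - A.mulVec x k) ^ 2) ≤ σ →
      (∑ i, |xs i|) ≤ ∑ i, |x i|) :
    (∑ i, (xs i - x₀ i) ^ 2) ≤ (ε + σ) ^ 2 / (1 - M * (4 * N - 1)) := by
  classical
  set h : Fin n → ℝ := fun i => xs i - x₀ i with hh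
  set t : ℝ := ∑ i, h i ^ 2 with ht
  set L : ℝ := ∑ i, |h i| with hL
  -- Step A: ‖A h‖ ≤ ε + σ
  have hAh_eq : ∀ k, A.mulVec h k = w k + (A.mulVec xs k - y k) := by
    intro k
    have : A.mulVec h k = A.mulVec xs k - A.mulVec x₀ k := by
      simp [hh, Matrix.mulVec, dotProduct, mul_sub, Finset.sum_sub_distrib]
    rw [this, hy]; simp [Pi.add_apply]; ring
  have hAh_norm : Real.sqrt (∑ k, (A.mulVec h k) ^ 2) ≤ ε + σ := by
    have h1 : Real.sqrt (∑ k, (w k + (A.mulVec xs k - y k)) ^ 2) ≤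
        Real.sqrt (∑ k, (w k) ^ 2) + Real.sqrt (∑ k, (A.mulVec xs k - y k) ^ 2) :=
      sqrt_sum_sq_add_le _ _
    have h2 : ∑ k, (A.mulVec xs k - y k) ^ 2 = ∑ k, (y k - A.mulVec xs k) ^ 2 := by
      refine Finset.sum_congr rfl fun k _ => ?_; ring
    calc Real.sqrt (∑ k, (A.mulVec h k) ^ 2)
        = Real.sqrt (∑ k, (w k + (A.mulVec xs k - y k)) ^ 2) := by
          congr 1; exact Finset.sum_congr rfl fun k _ => by rw [hAh_eq k]
      _ ≤ Real.sqrt (∑ k, (w k) ^ 2) + Real.sqrt (∑ k, (A.mulVec xs k - y k) ^ 2) := h1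
      _ ≤ ε + σ := by rw [h2]; exact add_le_add hw hfeas
  have hAh_sq : ∑ k, (A.mulVec h k) ^ 2 ≤ (ε + σ) ^ 2 := by
    have hnn : (0:ℝ) ≤ ∑ k, (A.mulVec h k) ^ 2 :=
      Finset.sum_nonneg fun k _ => sq_nonneg _
    have := Real.sqrt_le_sqrt (le_of_eq (Real.sq_sqrt hnn).symm)
    nlinarith [Real.sq_sqrt hnn, Real.sqrt_nonneg (∑ k, (A.mulVec h k) ^ 2),
      sq_nonneg (Real.sqrt (∑ k, (A.mulVec h k) ^ 2))]
  -- Step B: quadratic form lower bound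
  have hGbound : ∀ i j : Fin n, i ≠ j → |∑ k, A k i * A k j| ≤ M := by
    intro i j hij
    exact hM.2 ⟨i, j, hij, rfl⟩
  have hdiag : ∀ i : Fin n, (∑ k, A k i * A k i) = 1 := by
    intro i
    rw [← hcols i]
    exact Finset.sum_congr rfl fun k _ => (sq (A k i)).symm
  have hquad : (1 + M) * t - M * L ^ 2 ≤ ∑ k, (A.mulVec h k) ^ 2 := by
    rw [sum_mulVec_sq]
    have key : ∀ i : Fin n,
        h i ^ 2 - M * (|h i| * (L - |h i|)) ≤ ∑ j, h i * h j * (∑ k, A k i * A k j) := by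
      intro i
      have hsplit : ∑ j, h i * h j * (∑ k, A k i * A k j)
          = (∑ j ∈ Finset.univ.erase i, h i * h j * (∑ k, A k i * A k j))
            + h i ^ 2 := by
        rw [← Finset.sum_erase_add Finset.univ _ (Finset.mem_univ i), hdiag i,
          mul_one, ← sq]
      rw [hsplit]
      have hoff : -(M * (|h i| * (L - |h i|)))
          ≤ ∑ j ∈ Finset.univ.erase i, h i * h j * (∑ k, A k i * A k j) := by
        have hLsplit : ∑ j ∈ Finset.univ.erase i, |h j| = L - |h i| := by
          have := Finset.sum_erase_add Finset.univ (fun j => |h j|) (Finset.mem_univ i)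
          simp only [hL]; linarith
        have : ∑ j ∈ Finset.univ.erase i, -(M * (|h i| * |h j|))
            ≤ ∑ j ∈ Finset.univ.erase i, h i * h j * (∑ k, A k i * A k j) := by
          refine Finset.sum_le_sum fun j hj => ?_
          have hij : i ≠ j := fun e => (Finset.mem_erase.mp hj).1 e.symm
          have habs : |h i * h j * (∑ k, A k i * A k j)| ≤ M * (|h i| * |h j|) := by
            rw [abs_mul, abs_mul]
            calc |h i| * |h j| * |∑ k, A k i * A k j|
                ≤ |h i| * |h j| * M := by
                  exact mul_le_mul_of_nonneg_left (hGbound i j hij)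
                    (mul_nonneg (abs_nonneg _) (abs_nonneg _))
              _ = M * (|h i| * |h j|) := by ring
          linarith [neg_abs_le (h i * h j * (∑ k, A k i * A k j))]
        calc -(M * (|h i| * (L - |h i|)))
            = ∑ j ∈ Finset.univ.erase i, -(M * (|h i| * |h j|)) := by
              rw [Finset.sum_neg_distrib, ← Finset.mul_sum, ← Finset.mul_sum, hLsplit]
          _ ≤ _ := this
      linarith
    have := Finset.sum_le_sum fun i (_ : i ∈ Finset.univ) => key i
    have hexp : ∑ i, (h i ^ 2 - M * (|h i| * (L - |h i|)))
        = (1 + M) * t - M * L ^ 2 := by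
      have habs2 : ∀ i : Fin n, |h i| * |h i| = h i ^ 2 := fun i => by
        rw [← abs_mul, abs_of_nonneg (mul_self_nonneg _), sq]
      calc ∑ i, (h i ^ 2 - M * (|h i| * (L - |h i|)))
          = ∑ i, (h i ^ 2 - M * L * |h i| + M * (h i ^ 2)) := by
            refine Finset.sum_congr rfl fun i _ => ?_
            have := habs2 i; nlinarith [habs2 i]
        _ = t - M * L * L + M * t := by
            rw [Finset.sum_add_distrib, Finset.sum_sub_distrib, ← Finset.mul_sum,
              ← Finset.mul_sum, ← hL, ← ht]
        _ = (1 + M) * t - M * L ^ 2 := by ring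
    linarith [hexp ▸ this]
  -- Step C: ℓ¹ minimality gives L² ≤ 4 N t
  have hx₀feas : Real.sqrt (∑ k, (y k - A.mulVec x₀ k) ^ 2) ≤ σ := by
    have : ∀ k, y k - A.mulVec x₀ k = w k := by
      intro k; rw [hy]; simp
    calc Real.sqrt (∑ k, (y k - A.mulVec x₀ k) ^ 2)
        = Real.sqrt (∑ k, (w k) ^ 2) := by
          congr 1; exact Finset.sum_congr rfl fun k _ => by rw [this k]
      _ ≤ ε := hw
      _ ≤ σ := hεσ
  have hl1 : (∑ i, |xs i|) ≤ ∑ i, |x₀ i| := hmin x₀ hx₀feas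
  set S : Finset (Fin n) := Finset.univ.filter (fun i => x₀ i ≠ 0) with hS
  have hL_le : L ≤ 2 * ∑ i ∈ S, |h i| := by
    have hsplit_xs : ∑ i, |xs i| = (∑ i ∈ S, |xs i|) + ∑ i ∈ Sᶜ, |xs i| :=
      (Finset.sum_add_sum_compl S _).symm
    have hsplit_x0 : ∑ i, |x₀ i| = ∑ i ∈ S, |x₀ i| := by
      rw [← Finset.sum_add_sum_compl S (fun i => |x₀ i|)]
      have : ∑ i ∈ Sᶜ, |x₀ i| = 0 := by
        refine Finset.sum_eq_zero fun i hi => ?_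
        have : ¬ (x₀ i ≠ 0) := by
          simpa [hS] using (Finset.mem_compl.mp hi)
        simp [not_not.mp this]
      rw [this, add_zero]
    have hSc : ∑ i ∈ Sᶜ, |xs i| = ∑ i ∈ Sᶜ, |h i| := by
      refine Finset.sum_congr rfl fun i hi => ?_
      have hz : x₀ i = 0 := by
        have : ¬ (x₀ i ≠ 0) := by simpa [hS] using (Finset.mem_compl.mp hi)
        exact not_not.mp this
      simp [hh, hz]
    have hSlow : ∀ i ∈ S, |x₀ i| - |h i| ≤ |xs i| := by
      intro i _
      have : xs i = x₀ i + h i := by simp [hh]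
      rw [this]
      have := abs_add_le (x₀ i + h i) (-(h i))
      simp at this
      linarith [abs_sub_abs_le_abs_sub (x₀ i + h i) (h i), abs_add_le (x₀ i) (h i),
        abs_abs (h i)]
    have hSlow' : (∑ i ∈ S, |x₀ i|) - (∑ i ∈ S, |h i|) ≤ ∑ i ∈ S, |xs i| := by
      rw [← Finset.sum_sub_distrib]
      exact Finset.sum_le_sum hSlow
    have hcompl : ∑ i ∈ Sᶜ, |h i| ≤ ∑ i ∈ S, |h i| := by
      have := hl1
      rw [hsplit_xs, hsplit_x0, hSc] at this
      linarith
    have hLsplit : L = (∑ i ∈ S, |h i|) + ∑ i ∈ Sᶜ, |h i| :=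
      (Finset.sum_add_sum_compl S _).symm
    linarith
  have hCS : (∑ i ∈ S, |h i|) ^ 2 ≤ (N : ℝ) * t := by
    have := Finset.sum_mul_sq_le_sq_mul_sq S (fun _ => (1:ℝ)) (fun i => |h i|)
    simp only [one_mul, one_pow] at this
    have hcard : (∑ _i ∈ S, (1:ℝ)) = (N : ℝ) := by
      rw [Finset.sum_const, nsmul_eq_mul, mul_one]
      exact_mod_cast congrArg (Nat.cast : ℕ → ℝ) hx₀
    have hsq : ∑ i ∈ S, |h i| ^ 2 = ∑ i ∈ S, h i ^ 2 :=
      Finset.sum_congr rfl fun i _ => sq_abs _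
    have hsub : ∑ i ∈ S, h i ^ 2 ≤ t := by
      rw [ht]
      exact Finset.sum_le_sum_of_subset_of_nonneg (Finset.subset_univ S)
        (fun i _ _ => sq_nonneg _)
    calc (∑ i ∈ S, |h i|) ^ 2 ≤ (∑ _i ∈ S, (1:ℝ)) * ∑ i ∈ S, |h i| ^ 2 := this
      _ = (N : ℝ) * ∑ i ∈ S, h i ^ 2 := by rw [hcard, hsq]
      _ ≤ (N : ℝ) * t := by
          exact mul_le_mul_of_nonneg_left hsub (Nat.cast_nonneg N)
  have hL2 : L ^ 2 ≤ 4 * (N : ℝ) * t := by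
    have hLnn : 0 ≤ ∑ i ∈ S, |h i| := Finset.sum_nonneg fun i _ => abs_nonneg _
    have hL0 : 0 ≤ L := Finset.sum_nonneg fun i _ => abs_nonneg _
    have h4 : L ^ 2 ≤ 4 * (∑ i ∈ S, |h i|) ^ 2 := by nlinarith [hL_le, hL0, hLnn]
    linarith [hCS]
  -- Step D: combine
  have hd : 0 < 1 - M * (4 * (N : ℝ) - 1) := by
    have h1 : 4 * (N : ℝ) - 1 < M⁻¹ := by linarith [hNs]
    have h2 : M * (4 * (N : ℝ) - 1) < M * M⁻¹ := by
      exact mul_lt_mul_of_pos_left h1 hMpos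
    rw [mul_inv_cancel₀ (ne_of_gt hMpos)] at h2
    linarith
  have hfinal : (1 - M * (4 * (N : ℝ) - 1)) * t ≤ (ε + σ) ^ 2 := by
    have : (1 + M) * t - M * L ^ 2 ≤ (ε + σ) ^ 2 := le_trans hquad hAh_sq
    nlinarith [hL2, hMpos.le]
  have htnn : 0 ≤ t := Finset.sum_nonneg fun i _ => sq_nonneg _
  rw [le_div_iff₀ hd]
  linarith [hfinal]
end
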